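/- There exists an element γ ∈ B_n such that for all 1 ≤ i < j ≤ n: γ a_{i,j} γ^{−1} = a_{i+1,j+1} whenever j < n, and γ a_{i,n} γ^{−1} = a_{1,i+1}. (In other words, the cyclic shift a_{i,j} ↦ a_{[i+1],[j+1]} of band generators, with indices taken modulo n, is realized by an inner automorphism of B_n.) -/

import Mathlib

/-- The defining relations of the braid group on `n` strands, inside the free group on
generators indexed by `ℕ`.  Generator `i` corresponds to the Artin generator `σ_i`
(for `1 ≤ i ≤ n-1`); generators with index `0` or `≥ n` are killed. -/
def braidRels (n : ℕ) : Set (FreeGroup ℕ) :=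
  {r | (∃ i j : ℕ, 1 ≤ i ∧ i + 2 ≤ j ∧ j ≤ n - 1 ∧
          r = FreeGroup.of i * FreeGroup.of j * (FreeGroup.of i)⁻¹ * (FreeGroup.of j)⁻¹) ∨
       (∃ i : ℕ, 1 ≤ i ∧ i + 1 ≤ n - 1 ∧
          r = FreeGroup.of i * FreeGroup.of (i+1) * FreeGroup.of i *
              (FreeGroup.of (i+1) * FreeGroup.of i * FreeGroup.of (i+1))⁻¹) ∨
       (∃ i : ℕ, (i = 0 ∨ n ≤ i) ∧ r = FreeGroup.of i)}

/-- The braid group `B_n` on `n` strands. -/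
abbrev Braid (n : ℕ) := PresentedGroup (braidRels n)

/-- The Artin generator `σ_i` of `B_n`. -/
def genσ (n i : ℕ) : Braid n := PresentedGroup.of i

/-- The band generator `a_{i,j} = (σ_{j-1} ⋯ σ_{i+1}) σ_i (σ_{i+1}⁻¹ ⋯ σ_{j-1}⁻¹)`. -/
def band (n i j : ℕ) : Braid n :=
  (((List.range' (i+1) (j-1-i)).reverse.map (genσ n)).prod) * genσ n i *
    (((List.range' (i+1) (j-1-i)).reverse.map (genσ n)).prod)⁻¹

/-- The dual braid monoid `B_n^{+*}`: the submonoid of `B_n` generated by the band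
generators `a_{i,j}`, `1 ≤ i < j ≤ n`. -/
def dualMonoid (n : ℕ) : Submonoid (Braid n) :=
  Submonoid.closure {x | ∃ i j : ℕ, 1 ≤ i ∧ i < j ∧ j ≤ n ∧ x = band n i j}

/-- The submonoid `B_I^{+*}` generated by the band generators `a_{i,j}` with `i, j ∈ I`. -/
def dualMonoidOn (n : ℕ) (I : Set ℕ) : Submonoid (Braid n) :=
  Submonoid.closure {x | ∃ i j : ℕ, i ∈ I ∧ j ∈ I ∧ 1 ≤ i ∧ i < j ∧ j ≤ n ∧ x = band n i j}

/-- Evaluation of a word in the letters `σ_i^{±1}` (a letter is a pair of an index and a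
sign, `true` meaning positive). -/
def evalWord (n : ℕ) (w : List (ℕ × Bool)) : Braid n :=
  (w.map (fun p => if p.2 then genσ n p.1 else (genσ n p.1)⁻¹)).prod

/-- `γ` is `σ_i`-positive: it is represented by a word in the letters `σ_1^{±1}, …,
σ_{n-1}^{±1}` containing at least one `σ_i`, no `σ_i⁻¹`, and no `σ_j^{±1}` with `j < i`. -/
def SigmaPositive (n i : ℕ) (γ : Braid n) : Prop :=
  ∃ w : List (ℕ × Bool),
    (∀ p ∈ w, 1 ≤ p.1 ∧ p.1 ≤ n - 1) ∧
    (i, true) ∈ w ∧ (i, false) ∉ w ∧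
    (∀ p ∈ w, i ≤ p.1) ∧
    evalWord n w = γ

/-- The Dehornoy ordering on `B_n`: `α <_D β` iff `α⁻¹β` is `σ_i`-positive for some `i`. -/
def dehornoyLt (n : ℕ) (α β : Braid n) : Prop :=
  ∃ i : ℕ, 1 ≤ i ∧ i ≤ n - 1 ∧ SigmaPositive n i (α⁻¹ * β)

namespace BraidAux

lemma swap {G : Type*} [Group G] {a b : G} (h : Commute a b) (c : G) :
    a * (b * c) = b * (a * c) := by rw [← mul_assoc, h.eq, mul_assoc]

lemma braid_conj {G : Type*} [Group G] {a b : G} (h : a * b * a = b * a * b) (x : G) :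
    a⁻¹ * (b * (a * x)) = b * (a * (b⁻¹ * x)) := by
  have h0 : a * (b * a) = b * (a * b) := by
    rw [← mul_assoc, h, mul_assoc]
  have h' : b * a = a⁻¹ * (b * (a * b)) := by
    rw [← h0]; group
  calc a⁻¹ * (b * (a * x)) = (a⁻¹ * (b * (a * b))) * (b⁻¹ * x) := by group
    _ = (b * a) * (b⁻¹ * x) := by rw [← h']
    _ = b * (a * (b⁻¹ * x)) := by group

lemma rel_eq_one {n : ℕ} {r : FreeGroup ℕ} (hr : r ∈ braidRels n) :
    PresentedGroup.mk (braidRels n) r = 1 :=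
  (QuotientGroup.eq_one_iff r).2 (Subgroup.subset_normalClosure hr)

@[simp] lemma mk_of (n i : ℕ) :
    PresentedGroup.mk (braidRels n) (FreeGroup.of i) = genσ n i := rfl

lemma genσ_one {n i : ℕ} (h : i = 0 ∨ n ≤ i) : genσ n i = 1 :=
  rel_eq_one (Or.inr (Or.inr ⟨i, h, rfl⟩))

lemma comm_all {n i j : ℕ} (h : i + 2 ≤ j) : Commute (genσ n i) (genσ n j) := by
  rcases Nat.eq_zero_or_pos i with hi | hi
  · subst hi; rw [genσ_one (Or.inl rfl)]; exact Commute.one_left _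
  rcases le_or_gt n j with hj | hj
  · rw [genσ_one (Or.inr hj)]; exact Commute.one_right _
  have h3 : j ≤ n - 1 := by omega
  have := rel_eq_one (n := n) (Or.inl ⟨i, j, hi, h, h3, rfl⟩)
  simp only [map_mul, map_inv, mk_of] at this
  rw [mul_inv_eq_one, mul_inv_eq_iff_eq_mul] at this
  exact this

lemma braid_rel {n i : ℕ} (h1 : 1 ≤ i) (h2 : i + 2 ≤ n) :
    genσ n i * genσ n (i+1) * genσ n i = genσ n (i+1) * genσ n i * genσ n (i+1) := by
  have h3 : i + 1 ≤ n - 1 := by omega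
  have := rel_eq_one (n := n) (Or.inr (Or.inl ⟨i, h1, h3, rfl⟩))
  simp only [map_mul, map_inv, mk_of] at this
  rwa [mul_inv_eq_one] at this

def dP (n a b : ℕ) : Braid n := ((List.range' a b).reverse.map (genσ n)).prod

lemma band_eq (n i j : ℕ) :
    band n i j = dP n (i+1) (j-1-i) * genσ n i * (dP n (i+1) (j-1-i))⁻¹ := rfl

@[simp] lemma dP_zero (n a : ℕ) : dP n a 0 = 1 := rfl

lemma dP_succ (n a b : ℕ) : dP n a (b+1) = genσ n (a+b) * dP n a b := by
  simp [dP, List.range'_concat]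

lemma dP_split (n a b c : ℕ) : dP n a (b + c) = dP n (a + b) c * dP n a b := by
  have : List.range' a (b + c) = List.range' a b ++ List.range' (a + b) c := by
    have := List.range'_append (s := a) (m := b) (n := c) (step := 1)
    simpa [Nat.add_comm] using this.symm
  rw [dP, this, List.reverse_append, List.map_append, List.prod_append]
  simp [dP]

lemma comm_dP {n k a b : ℕ} (h : ∀ m, a ≤ m → m < a + b → Commute (genσ n k) (genσ n m)) :
    Commute (genσ n k) (dP n a b) := by
  apply Commute.list_prod_right
  intro x hx
  simp only [List.mem_map, List.mem_reverse, List.mem_range'_1] at hx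
  obtain ⟨m, ⟨hm1, hm2⟩, rfl⟩ := hx
  exact h m hm1 hm2

-- δ := dP n 1 (n-1) = σ_{n-1} ⋯ σ_1

lemma shift {n k : ℕ} (h1 : 1 ≤ k) (h2 : k + 2 ≤ n) :
    genσ n k * dP n 1 (n-1) = dP n 1 (n-1) * genσ n (k+1) := by
  obtain ⟨c, hc⟩ : ∃ c, n - 1 = (k+1) + c := ⟨n - 2 - k, by omega⟩
  obtain ⟨m, hm⟩ : ∃ m, k = m + 1 := ⟨k - 1, by omega⟩
  have hsplit : dP n 1 (n-1) = dP n (k+2) c * dP n 1 (k+1) := by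
    rw [hc, dP_split, show 1 + (k+1) = k + 2 from by omega]
  have h1k : dP n 1 (k+1) = genσ n (k+1) * (genσ n k * dP n 1 m) := by
    rw [dP_succ, show (1:ℕ) + k = k + 1 from by omega, hm, dP_succ,
      show (1:ℕ) + m = m + 1 from by omega]
  have c1 : Commute (genσ n k) (dP n (k+2) c) :=
    comm_dP (fun m hm1 _ => comm_all hm1)
  have c2 : Commute (genσ n (k+1)) (dP n 1 m) :=
    comm_dP (fun j hj1 hj2 => (comm_all (by omega)).symm)
  have hb3 : genσ n k * (genσ n (k+1) * (genσ n k * dP n 1 m)) =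
      genσ n (k+1) * (genσ n k * (genσ n (k+1) * dP n 1 m)) := by
    rw [← mul_assoc, ← mul_assoc, braid_rel h1 h2, mul_assoc, mul_assoc]
  rw [hsplit, h1k, swap c1, hb3, c2.eq]
  group

lemma shift_conj {n k : ℕ} (h1 : 1 ≤ k) (h2 : k + 2 ≤ n) :
    (dP n 1 (n-1))⁻¹ * genσ n k * dP n 1 (n-1) = genσ n (k+1) := by
  rw [mul_assoc, shift h1 h2, ← mul_assoc, inv_mul_cancel, one_mul]

lemma conj_dP {n a b : ℕ} (h1 : 1 ≤ a) (h2 : a + b + 1 ≤ n) :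
    (dP n 1 (n-1))⁻¹ * dP n a b * dP n 1 (n-1) = dP n (a+1) b := by
  induction b with
  | zero => simp
  | succ b ih =>
    have ih' := ih (by omega)
    rw [dP_succ, dP_succ]
    calc (dP n 1 (n-1))⁻¹ * (genσ n (a + b) * dP n a b) * dP n 1 (n-1)
        = ((dP n 1 (n-1))⁻¹ * genσ n (a+b) * dP n 1 (n-1)) *
          ((dP n 1 (n-1))⁻¹ * dP n a b * dP n 1 (n-1)) := by group
      _ = genσ n (a+b+1) * dP n (a+1) b := by
          rw [shift_conj (by omega) (by omega), ih']
      _ = genσ n (a+1+b) * dP n (a+1) b := by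
          rw [show a + b + 1 = a + 1 + b from by omega]

lemma wrap_core {n m : ℕ} (h : m + 1 < n) :
    (dP n 1 m)⁻¹ * genσ n (m+1) * dP n 1 m = band n 1 (m+2) := by
  induction m with
  | zero => simp [band_eq, dP]
  | succ m ih =>
    have ih' := ih (by omega)
    have hb : genσ n (m+1) * genσ n (m+2) * genσ n (m+1) =
        genσ n (m+2) * genσ n (m+1) * genσ n (m+2) := braid_rel (by omega) (by omega)
    have c2 : Commute (genσ n (m+2)) (dP n 1 m) :=
      comm_dP (fun j hj1 hj2 => (comm_all (by omega)).symm)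
    have hdp : dP n 1 (m+1) = genσ n (m+1) * dP n 1 m := by
      rw [dP_succ, show (1:ℕ) + m = m + 1 from by omega]
    have hband : band n 1 (m+1+2) = genσ n (m+2) * (band n 1 (m+2) * (genσ n (m+2))⁻¹) := by
      rw [band_eq, band_eq, show m + 1 + 2 - 1 - 1 = m + 1 from by omega,
        show m + 2 - 1 - 1 = m from by omega, dP_succ,
        show (2:ℕ) + m = m + 2 from by omega]
      group
    calc (dP n 1 (m+1))⁻¹ * genσ n (m+1+1) * dP n 1 (m+1)
        = (dP n 1 m)⁻¹ * ((genσ n (m+1))⁻¹ * (genσ n (m+2) * (genσ n (m+1) * dP n 1 m))) := by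
          rw [hdp, show m + 1 + 1 = m + 2 from by omega]; group
      _ = (dP n 1 m)⁻¹ * (genσ n (m+2) * (genσ n (m+1) * ((genσ n (m+2))⁻¹ * dP n 1 m))) := by
          rw [braid_conj hb]
      _ = genσ n (m+2) * ((dP n 1 m)⁻¹ * (genσ n (m+1) * (dP n 1 m * (genσ n (m+2))⁻¹))) := by
          rw [c2.inv_left.eq, swap c2.symm.inv_left]
      _ = genσ n (m+2) * (((dP n 1 m)⁻¹ * genσ n (m+1) * dP n 1 m) * (genσ n (m+2))⁻¹) := by
          group
      _ = band n 1 (m+1+2) := by rw [ih', ← hband]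

end BraidAux


open BraidAux

/-- Theorem: the cyclic shift `a_{i,j} ↦ a_{[i+1],[j+1]}` of band generators is realized
by an inner automorphism of `B_n`: there is `γ ∈ B_n` with `γ a_{i,j} γ⁻¹ = a_{i+1,j+1}`
for `j < n` and `γ a_{i,n} γ⁻¹ = a_{1,i+1}`. -/
theorem cyclic_shift_inner (n : ℕ) (hn : 2 ≤ n) :
    ∃ γ : Braid n,
      (∀ i j : ℕ, 1 ≤ i → i < j → j < n →
        γ * band n i j * γ⁻¹ = band n (i + 1) (j + 1)) ∧
      (∀ i : ℕ, 1 ≤ i → i < n → γ * band n i n * γ⁻¹ = band n 1 (i + 1)) := by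
  refine ⟨(dP n 1 (n-1))⁻¹, ?_, ?_⟩
  · intro i j h1 h2 h3
    have e1 : (dP n 1 (n-1))⁻¹ * dP n (i+1) (j-1-i) * dP n 1 (n-1) = dP n (i+2) (j-1-i) := by
      have := conj_dP (n := n) (a := i+1) (b := j-1-i) (by omega) (by omega)
      rwa [show i + 1 + 1 = i + 2 from rfl] at this
    have e2 := shift_conj (n := n) (k := i) h1 (by omega)
    rw [band_eq, band_eq, show j + 1 - 1 - (i+1) = j - 1 - i from by omega, inv_inv]
    calc (dP n 1 (n-1))⁻¹ * (dP n (i+1) (j-1-i) * genσ n i * (dP n (i+1) (j-1-i))⁻¹) *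
          dP n 1 (n-1)
        = ((dP n 1 (n-1))⁻¹ * dP n (i+1) (j-1-i) * dP n 1 (n-1)) *
          ((dP n 1 (n-1))⁻¹ * genσ n i * dP n 1 (n-1)) *
          ((dP n 1 (n-1))⁻¹ * dP n (i+1) (j-1-i) * dP n 1 (n-1))⁻¹ := by group
      _ = dP n (i+2) (j-1-i) * genσ n (i+1) * (dP n (i+2) (j-1-i))⁻¹ := by rw [e1, e2]
  · intro i h1 h2
    obtain ⟨m, rfl⟩ : ∃ m, i = m + 1 := ⟨i - 1, by omega⟩
    obtain ⟨c, hc⟩ : ∃ c, n - 1 = (m+1) + c := ⟨n - 2 - m, by omega⟩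
    have hc2 : n - 1 - (m+1) = c := by omega
    have hsplit : dP n 1 (n-1) = dP n (m+2) c * dP n 1 (m+1) := by
      rw [hc, dP_split, show 1 + (m+1) = m + 2 from by omega]
    rw [band_eq, inv_inv, show m + 1 + 1 = m + 2 from by omega, hc2]
    calc (dP n 1 (n-1))⁻¹ *
          (dP n (m+2) c * genσ n (m+1) * (dP n (m+2) c)⁻¹) *
          dP n 1 (n-1)
        = (dP n 1 (m+1))⁻¹ * genσ n (m+1) * dP n 1 (m+1) := by rw [hsplit]; group
      _ = (dP n 1 m)⁻¹ * genσ n (m+1) * dP n 1 m := by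
          rw [dP_succ, show (1:ℕ) + m = m + 1 from by omega]; group
      _ = band n 1 (m+1+1) := wrap_core (by omega)
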